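/- Let S = ⟨qm₁,…,qm_d, pn₁,…,pn_k⟩ be a specific gluing of S₁ and S₂. Then ord_S(s + qm₁) = ord_S(s) + 1 for all s∈S if and only if ord_{S₁}(s + m₁) = ord_{S₁}(s) + 1 for all s∈S₁; equivalently (by García's criterion, since m(S) = qm₁ and m(S₁) = m₁), the tangent cone G(S) is Cohen–Macaulay if and only if the tangent cone G(S₁) is Cohen–Macaulay. -/

import Mathlib

open scoped Pointwise

/-- `S ⊆ ℕ` is a numerical semigroup: it contains `0`, is closed under
addition, and has finite complement in `ℕ`. -/
def IsNumSgp (S : Set ℕ) : Prop :=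
  (0 : ℕ) ∈ S ∧ (∀ a ∈ S, ∀ b ∈ S, a + b ∈ S) ∧ {x : ℕ | x ∉ S}.Finite

/-- `nM S t` is the `t`-fold sumset of the maximal ideal `M = S \ {0}`,
with the convention `nM S 0 = S`. -/
def nM (S : Set ℕ) : ℕ → Set ℕ
  | 0 => S
  | t + 1 => (S \ {0}) + nM S t

/-- the order of `s` with respect to `S` : the largest `t` with `s ∈ tM`. -/
noncomputable def ordS (S : Set ℕ) (s : ℕ) : ℕ := sSup {t : ℕ | s ∈ nM S t}

/-- the multiplicity of `S` : its least nonzero element. -/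
noncomputable def mult (S : Set ℕ) : ℕ := sInf {x : ℕ | x ∈ S ∧ x ≠ 0}

/-- the Apéry set of `S` with respect to `x` : elements `s ∈ S` with `s - x ∉ S`. -/
def Ap (S : Set ℕ) (x : ℕ) : Set ℕ := {s : ℕ | s ∈ S ∧ ¬ ∃ t ∈ S, s = t + x}

/-- membership of an integer in (the image in `ℤ` of) `S`. -/
def zmem (S : Set ℕ) (z : ℤ) : Prop := ∃ t ∈ S, (t : ℤ) = z

/-- the Frobenius number of `S` : the largest integer not in `S`. -/
noncomputable def Frob (S : Set ℕ) : ℤ := sSup {z : ℤ | ¬ zmem S z}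

/-- `S` is symmetric: for every integer `z`, `z ∈ S` iff `F(S) - z ∉ S`. -/
def IsSymmetric (S : Set ℕ) : Prop := ∀ z : ℤ, zmem S z ↔ ¬ zmem S (Frob S - z)

/-- the set of maximal elements of `Ap S x` with respect to the order
`u ⪯ v` iff `v = u + z` for some `z ∈ S`. -/
def MaxAp (S : Set ℕ) (x : ℕ) : Set ℕ :=
  {w : ℕ | w ∈ Ap S x ∧ ∀ y ∈ Ap S x, (∃ z ∈ S, y = w + z) → y = w}

/-- the set of maximal elements of `Ap S x` with respect to the order
`u ⪯_M v` iff `v = u + z` for some `z ∈ S` with `ord(v) = ord(u) + ord(z)`. -/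
def MaxMAp (S : Set ℕ) (x : ℕ) : Set ℕ :=
  {w : ℕ | w ∈ Ap S x ∧ ∀ y ∈ Ap S x,
    (∃ z ∈ S, y = w + z ∧ ordS S y = ordS S w + ordS S z) → y = w}

/-- `S` is M-pure with respect to `x` : all maximal elements of `Ap S x`
under `⪯_M` have the same order. -/
def MPureWrt (S : Set ℕ) (x : ℕ) : Prop :=
  ∀ w ∈ MaxMAp S x, ∀ w' ∈ MaxMAp S x, ordS S w = ordS S w'

/-- `S` is M-pure : it is M-pure with respect to its multiplicity. -/
def MPure (S : Set ℕ) : Prop := MPureWrt S (mult S)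

/-- `β_i(x)` : the number of elements of `Ap S x` of order `i`. -/
noncomputable def betaS (S : Set ℕ) (x i : ℕ) : ℕ := {w ∈ Ap S x | ordS S w = i}.ncard

/-- `d(x)` : the maximal order of an element of `Ap S x`. -/
noncomputable def dS (S : Set ℕ) (x : ℕ) : ℕ := sSup (ordS S '' Ap S x)

/-- the reduction number of `S` : the least `r` with `(r+1)M = m(S) + rM`. -/
noncomputable def redNum (S : Set ℕ) : ℕ :=
  sInf {r : ℕ | nM S (r + 1) = (fun y => mult S + y) '' nM S r}

/-- `l_x(S) = max { ord(s+x) - ord(x) - ord(s) : s ∈ S, ord(s) ≤ r }`. -/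
noncomputable def lS (S : Set ℕ) (x : ℕ) : ℕ :=
  sSup {t : ℕ | ∃ s ∈ S, ordS S s ≤ redNum S ∧ t = ordS S (s + x) - ordS S x - ordS S s}

/-- the Hilbert function of `S`. -/
noncomputable def HilbS (S : Set ℕ) (t : ℕ) : ℕ := (nM S t \ nM S (t + 1)).ncard

/-- The data of a gluing `S = ⟨q m₁, …, q m_d, p n₁, …, p n_k⟩` of two numerical
semigroups `S₁ = ⟨m₁, …, m_d⟩` and `S₂ = ⟨n₁, …, n_k⟩`, minimally generated by
`m₁ < ⋯ < m_d` and `n₁ < ⋯ < n_k`, where `p ∈ S₁ \ {m₁, …, m_d}`,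
`q ∈ S₂ \ {n₁, …, n_k}` and `gcd(p, q) = 1`. -/
structure Gluing where
  d : ℕ
  k : ℕ
  hd : 0 < d
  hk : 0 < k
  m : Fin d → ℕ
  n : Fin k → ℕ
  p : ℕ
  q : ℕ
  hm : StrictMono m
  hn : StrictMono n
  hmin₁ : ∀ i, m i ∉ AddSubmonoid.closure (Set.range m \ {m i})
  hmin₂ : ∀ j, n j ∉ AddSubmonoid.closure (Set.range n \ {n j})
  hnum₁ : IsNumSgp (AddSubmonoid.closure (Set.range m) : Set ℕ)
  hnum₂ : IsNumSgp (AddSubmonoid.closure (Set.range n) : Set ℕ)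
  hp : p ∈ AddSubmonoid.closure (Set.range m)
  hq : q ∈ AddSubmonoid.closure (Set.range n)
  hpm : p ∉ Set.range m
  hqn : q ∉ Set.range n
  hpq : Nat.gcd p q = 1

/-- the numerical semigroup `S₁ = ⟨m₁, …, m_d⟩`. -/
def Gluing.S₁ (G : Gluing) : Set ℕ := (AddSubmonoid.closure (Set.range G.m) : Set ℕ)

/-- the numerical semigroup `S₂ = ⟨n₁, …, n_k⟩`. -/
def Gluing.S₂ (G : Gluing) : Set ℕ := (AddSubmonoid.closure (Set.range G.n) : Set ℕ)

/-- the glued numerical semigroup `S = ⟨q m₁, …, q m_d, p n₁, …, p n_k⟩`. -/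
def Gluing.S (G : Gluing) : Set ℕ :=
  (AddSubmonoid.closure
    ((fun x => G.q * x) '' Set.range G.m ∪ (fun x => G.p * x) '' Set.range G.n) : Set ℕ)

/-- the smallest generator `m₁` of `S₁`. -/
def Gluing.m₁ (G : Gluing) : ℕ := G.m ⟨0, G.hd⟩

/-- the smallest generator `n₁` of `S₂`. -/
def Gluing.n₁ (G : Gluing) : ℕ := G.n ⟨0, G.hk⟩

/-- the gluing is specific if `ord_{S₂}(q) + l_q(S₂) ≤ ord_{S₁}(p)`. -/
def Gluing.Specific (G : Gluing) : Prop := ordS G.S₂ G.q + lS G.S₂ G.q ≤ ordS G.S₁ G.p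

/-- the gluing is nice if `q = a n₁` for some `1 < a ≤ ord_{S₁}(p)`. -/
def Gluing.Nice (G : Gluing) : Prop := ∃ a : ℕ, 1 < a ∧ a ≤ ordS G.S₁ G.p ∧ G.q = a * G.n₁


section Library

variable {T : Set ℕ}

lemma nM_subset (h0 : (0:ℕ) ∈ T) (hadd : ∀ a ∈ T, ∀ b ∈ T, a + b ∈ T) :
    ∀ t, nM T t ⊆ T := by
  intro t
  induction t with
  | zero => exact fun x hx => hx
  | succ t ih =>
    intro x hx
    obtain ⟨m, hm, y, hy, rfl⟩ := Set.mem_add.1 hx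
    exact hadd m hm.1 y (ih hy)

lemma add_mem_nM (hadd : ∀ a ∈ T, ∀ b ∈ T, a + b ∈ T) :
    ∀ t, ∀ s ∈ T, ∀ y ∈ nM T t, s + y ∈ nM T t := by
  intro t
  induction t with
  | zero => exact fun s hs y hy => hadd s hs y hy
  | succ t ih =>
    intro s hs y hy
    obtain ⟨m, hm, y', hy', rfl⟩ := Set.mem_add.1 hy
    have : s + (m + y') = m + (s + y') := by ring
    rw [this]
    exact Set.mem_add.2 ⟨m, hm, s + y', ih s hs y' hy', rfl⟩

lemma nM_succ_subset (hadd : ∀ a ∈ T, ∀ b ∈ T, a + b ∈ T) (t : ℕ) :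
    nM T (t+1) ⊆ nM T t := by
  intro x hx
  obtain ⟨m, hm, y, hy, rfl⟩ := Set.mem_add.1 hx
  exact add_mem_nM hadd t m hm.1 y hy

lemma nM_anti (hadd : ∀ a ∈ T, ∀ b ∈ T, a + b ∈ T) {u v : ℕ} (huv : u ≤ v) :
    nM T v ⊆ nM T u := by
  induction v with
  | zero => simp_all
  | succ v ih =>
    rcases Nat.lt_or_ge u (v+1) with h | h
    · exact fun x hx => ih (by omega) (nM_succ_subset hadd v hx)
    · have : u = v + 1 := by omega
      subst this; exact fun x hx => hx

lemma nM_add_nM (hadd : ∀ a ∈ T, ∀ b ∈ T, a + b ∈ T) :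
    ∀ u v a b, a ∈ nM T u → b ∈ nM T v → a + b ∈ nM T (u + v) := by
  intro u
  induction u with
  | zero =>
    intro v a b ha hb
    simpa [Nat.zero_add] using add_mem_nM hadd v a ha b hb
  | succ u ih =>
    intro v a b ha hb
    obtain ⟨m, hm, a', ha', rfl⟩ := Set.mem_add.1 ha
    have : m + a' + b = m + (a' + b) := by ring
    rw [this]
    have : u + 1 + v = (u + v) + 1 := by ring
    rw [this]
    exact Set.mem_add.2 ⟨m, hm, a' + b, ih v a' b ha' hb, rfl⟩

lemma le_of_mem_nM : ∀ t x, x ∈ nM T t → t ≤ x := by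
  intro t
  induction t with
  | zero => exact fun x _ => Nat.zero_le x
  | succ t ih =>
    intro x hx
    obtain ⟨m, hm, y, hy, rfl⟩ := Set.mem_add.1 hx
    have h1 : 1 ≤ m := Nat.one_le_iff_ne_zero.2 (by simpa using hm.2)
    have := ih y hy
    omega

lemma ord_nonempty (hs : s ∈ T) : {t : ℕ | s ∈ nM T t}.Nonempty := ⟨0, hs⟩

lemma ord_bddAbove : BddAbove {t : ℕ | s ∈ nM T t} :=
  ⟨s, fun t ht => le_of_mem_nM t s ht⟩

lemma mem_nM_ordS {s : ℕ} (hs : s ∈ T) : s ∈ nM T (ordS T s) :=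
  Nat.sSup_mem (ord_nonempty hs) ord_bddAbove

lemma le_ordS {s t : ℕ} (h : s ∈ nM T t) : t ≤ ordS T s :=
  le_csSup ord_bddAbove h

lemma ordS_le {s k : ℕ} (hs : s ∈ T) (h : ∀ t, s ∈ nM T t → t ≤ k) : ordS T s ≤ k :=
  csSup_le (ord_nonempty hs) h

lemma mem_nM_of_le (hadd : ∀ a ∈ T, ∀ b ∈ T, a + b ∈ T) {s t : ℕ}
    (hs : s ∈ T) (h : t ≤ ordS T s) : s ∈ nM T t :=
  nM_anti hadd h (mem_nM_ordS hs)

lemma ordS_zero (h0 : (0:ℕ) ∈ T) : ordS T 0 = 0 :=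
  Nat.le_zero.1 (ordS_le h0 (fun t ht => le_of_mem_nM t 0 ht))

lemma ordS_add_ge (hadd : ∀ a ∈ T, ∀ b ∈ T, a + b ∈ T) {s y : ℕ}
    (hs : s ∈ T) (hy : y ∈ T) : ordS T s + ordS T y ≤ ordS T (s + y) :=
  le_ordS (nM_add_nM hadd _ _ _ _ (mem_nM_ordS hs) (mem_nM_ordS hy))

lemma ordS_pos (h0 : (0:ℕ) ∈ T) {s : ℕ} (hs : s ∈ T) (hs0 : s ≠ 0) : 1 ≤ ordS T s := by
  apply le_ordS (t := 1)
  show s ∈ (T \ {0}) + nM T 0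
  exact Set.mem_add.2 ⟨s, ⟨hs, by simpa using hs0⟩, 0, h0, by omega⟩

-- multiplicity and conductor
lemma exists_conductor (hfin : {x : ℕ | x ∉ T}.Finite) : ∃ c, ∀ x, c ≤ x → x ∈ T := by
  obtain ⟨B, hB⟩ := hfin.bddAbove
  refine ⟨B + 1, fun x hx => ?_⟩
  by_contra hxT
  have := hB hxT
  omega

lemma mult_nonempty (hfin : {x : ℕ | x ∉ T}.Finite) : {x : ℕ | x ∈ T ∧ x ≠ 0}.Nonempty := by
  obtain ⟨c, hc⟩ := exists_conductor hfin
  exact ⟨c + 1, hc _ (by omega), by omega⟩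

lemma mult_mem (hfin : {x : ℕ | x ∉ T}.Finite) : mult T ∈ T ∧ mult T ≠ 0 :=
  Nat.sInf_mem (mult_nonempty hfin)

lemma mult_le {x : ℕ} (hx : x ∈ T) (hx0 : x ≠ 0) : mult T ≤ x :=
  Nat.sInf_le ⟨hx, hx0⟩

lemma mult_nsmul_mem (hfin : {x : ℕ | x ∉ T}.Finite) (h0 : (0:ℕ) ∈ T) :
    ∀ k, k * mult T ∈ nM T k := by
  intro k
  induction k with
  | zero => simpa [nM] using h0
  | succ k ih =>
    show (k+1) * mult T ∈ (T \ {0}) + nM T k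
    refine Set.mem_add.2 ⟨mult T, ⟨(mult_mem hfin).1, by simpa using (mult_mem hfin).2⟩,
      k * mult T, ih, by ring⟩

lemma ordS_nsmul_add (hfin : {x : ℕ | x ∉ T}.Finite) (h0 : (0:ℕ) ∈ T)
    (hadd : ∀ a ∈ T, ∀ b ∈ T, a + b ∈ T) {z : ℕ} (hz : z ∈ T) (k : ℕ) :
    k + ordS T z ≤ ordS T (k * mult T + z) :=
  le_ordS (nM_add_nM hadd _ _ _ _ (mult_nsmul_mem hfin h0 k) (mem_nM_ordS hz))

/-- elements of small order are bounded -/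
lemma le_of_ordS_le (hfin : {x : ℕ | x ∉ T}.Finite) (h0 : (0:ℕ) ∈ T)
    (hadd : ∀ a ∈ T, ∀ b ∈ T, a + b ∈ T) {c : ℕ} (hc : ∀ x, c ≤ x → x ∈ T)
    {s r : ℕ} (hs : s ∈ T) (ho : ordS T s ≤ r) : s ≤ c + mult T * (r + 1) := by
  by_contra hbig
  push_neg at hbig
  set e := mult T with he
  have hz : s - e * (r+1) ∈ T := hc _ (by omega)
  have : (r+1) + ordS T (s - e*(r+1)) ≤ ordS T ((r+1) * e + (s - e*(r+1))) :=
    ordS_nsmul_add hfin h0 hadd hz (r+1)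
  have heq : (r+1) * e + (s - e*(r+1)) = s := by
    have h1 : (r+1) * e = e * (r+1) := by ring
    omega
  rw [heq] at this
  omega

-- list characterization of nM
lemma nM_exists_list : ∀ t x, x ∈ nM T t →
    ∃ l : List ℕ, l.length = t ∧ (∀ z ∈ l, z ∈ T ∧ z ≠ 0) ∧ ∃ y ∈ T, x = l.sum + y := by
  intro t
  induction t with
  | zero => exact fun x hx => ⟨[], rfl, by simp, x, hx, by simp⟩
  | succ t ih =>
    intro x hx
    obtain ⟨m, hm, y, hy, rfl⟩ := Set.mem_add.1 hx
    obtain ⟨l, hlen, hmem, y', hy', hsum⟩ := ih y hy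
    refine ⟨m :: l, by simp [hlen], ?_, y', hy', by simp [hsum]; ring⟩
    intro z hz
    rcases List.mem_cons.1 hz with rfl | hz
    · exact ⟨hm.1, by simpa using hm.2⟩
    · exact hmem z hz

lemma list_sum_mem_nM (hadd : ∀ a ∈ T, ∀ b ∈ T, a + b ∈ T) :
    ∀ (l : List ℕ), (∀ z ∈ l, z ∈ T ∧ z ≠ 0) → ∀ y ∈ T, l.sum + y ∈ nM T l.length := by
  intro l
  induction l with
  | nil => intro _ y hy; simpa [nM] using hy
  | cons a l ih =>
    intro hmem y hy
    have : (a :: l).sum + y = a + (l.sum + y) := by simp; ring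
    rw [this]
    show _ ∈ (T \ {0}) + nM T l.length
    refine Set.mem_add.2 ⟨a, ⟨(hmem a (by simp)).1, by simpa using (hmem a (by simp)).2⟩,
      l.sum + y, ih (fun z hz => hmem z (by simp [hz])) y hy, rfl⟩

/-- existence of the reduction number -/
lemma redNum_exists (hfin : {x : ℕ | x ∉ T}.Finite) (h0 : (0:ℕ) ∈ T)
    (hadd : ∀ a ∈ T, ∀ b ∈ T, a + b ∈ T) :
    {r : ℕ | nM T (r + 1) = (fun y => mult T + y) '' nM T r}.Nonempty := by
  obtain ⟨c, hc⟩ := exists_conductor hfin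
  set e := mult T with he
  have he1 : 1 ≤ e := Nat.one_le_iff_ne_zero.2 (mult_mem hfin).2
  refine ⟨c, ?_⟩
  apply Set.eq_of_subset_of_subset
  · intro x hx
    obtain ⟨l, hlen, hmem, y, hy, rfl⟩ := nM_exists_list (c+1) x hx
    by_cases hel : e ∈ l
    · -- remove one copy of e
      have hsum : l.sum = e + (l.erase e).sum := (List.sum_erase hel).symm
      refine ⟨(l.erase e).sum + y, ?_, by show e + _ = _; omega⟩
      have hlen' : (l.erase e).length = c := by
        rw [List.length_erase_of_mem hel, hlen]
        omega
      rw [← hlen']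
      exact list_sum_mem_nM hadd _ (fun z hz => hmem z (List.mem_of_mem_erase hz)) y hy
    · -- all entries ≥ e + 1
      have hge : ∀ z ∈ l, e + 1 ≤ z := by
        intro z hz
        have h1 := (hmem z hz).1
        have h2 := (hmem z hz).2
        have := mult_le h1 h2
        have hne : z ≠ e := fun h => hel (h ▸ hz)
        omega
      have hsl : (c+1) * (e+1) ≤ l.sum := by
        calc (c+1) * (e+1) = l.length * (e+1) := by rw [hlen]
        _ ≤ l.sum := by
            clear hel hlen hx
            induction l with
            | nil => simp
            | cons a l ih =>
              simp only [List.length_cons, List.sum_cons]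
              have ha := hge a (by simp)
              have := ih (fun z hz => hmem z (by simp [hz])) (fun z hz => hge z (by simp [hz]))
              have : l.length * (e+1) ≤ l.sum := this
              rw [Nat.succ_mul]
              omega
      set x := l.sum + y with hx'
      have hxbig : (c+1)*(e+1) ≤ x := by omega
      have hexp : (c+1)*(e+1) = (c+1)*e + c + 1 := by ring
      have hzc : c ≤ x - (c+1)*e := by omega
      have hzT : x - (c+1)*e ∈ T := hc _ hzc
      refine ⟨(x - (c+1)*e) + c * e, ?_, ?_⟩
      · exact add_mem_nM hadd c _ hzT _ (mult_nsmul_mem hfin h0 c)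
      · show e + _ = _
        have hee : (c+1)*e = c*e + e := by ring
        omega
  · intro x hx
    obtain ⟨y, hy, rfl⟩ := hx
    show e + y ∈ (T \ {0}) + nM T c
    exact Set.mem_add.2 ⟨e, ⟨(mult_mem hfin).1, by simpa using (mult_mem hfin).2⟩, y, hy, rfl⟩

lemma redNum_spec (hfin : {x : ℕ | x ∉ T}.Finite) (h0 : (0:ℕ) ∈ T)
    (hadd : ∀ a ∈ T, ∀ b ∈ T, a + b ∈ T) :
    nM T (redNum T + 1) = (fun y => mult T + y) '' nM T (redNum T) :=
  Nat.sInf_mem (redNum_exists hfin h0 hadd)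

lemma redNum_iter (hfin : {x : ℕ | x ∉ T}.Finite) (h0 : (0:ℕ) ∈ T)
    (hadd : ∀ a ∈ T, ∀ b ∈ T, a + b ∈ T) :
    ∀ j s, s ∈ nM T (redNum T + j) → ∃ y ∈ nM T (redNum T), s = j * mult T + y := by
  intro j
  induction j with
  | zero => exact fun s hs => ⟨s, hs, by simp⟩
  | succ j ih =>
    intro s hs
    have : redNum T + (j+1) = (redNum T + j) + 1 := by ring
    rw [this] at hs
    obtain ⟨m, hm, y', hy', rfl⟩ := Set.mem_add.1 hs
    obtain ⟨y, hy, rfl⟩ := ih y' hy'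
    have hmy : m + y ∈ nM T (redNum T + 1) :=
      Set.mem_add.2 ⟨m, hm, y, hy, rfl⟩
    rw [redNum_spec hfin h0 hadd] at hmy
    obtain ⟨y₂, hy₂, hy₂e⟩ := hmy
    refine ⟨y₂, hy₂, ?_⟩
    have hy₂e' : mult T + y₂ = m + y := hy₂e
    have : (j+1) * mult T = j * mult T + mult T := by ring
    omega

lemma ordS_le_self {s : ℕ} (hs : s ∈ T) : ordS T s ≤ s :=
  ordS_le hs (fun t ht => le_of_mem_nM t s ht)

lemma lS_bdd (hfin : {x : ℕ | x ∉ T}.Finite) (h0 : (0:ℕ) ∈ T)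
    (hadd : ∀ a ∈ T, ∀ b ∈ T, a + b ∈ T) {x : ℕ} (hx : x ∈ T) :
    BddAbove {t : ℕ | ∃ s ∈ T, ordS T s ≤ redNum T ∧ t = ordS T (s + x) - ordS T x - ordS T s} := by
  obtain ⟨c, hc⟩ := exists_conductor hfin
  refine ⟨c + mult T * (redNum T + 1) + x, ?_⟩
  rintro t ⟨s, hs, hord, rfl⟩
  have h1 : s ≤ c + mult T * (redNum T + 1) := le_of_ordS_le hfin h0 hadd hc hs hord
  have h2 : ordS T (s + x) ≤ s + x := ordS_le_self (hadd s hs x hx)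
  omega

lemma lS_ge (hfin : {x : ℕ | x ∉ T}.Finite) (h0 : (0:ℕ) ∈ T)
    (hadd : ∀ a ∈ T, ∀ b ∈ T, a + b ∈ T) {x s : ℕ} (hx : x ∈ T) (hs : s ∈ T)
    (hord : ordS T s ≤ redNum T) :
    ordS T (s + x) - ordS T x - ordS T s ≤ lS T x :=
  le_csSup (lS_bdd hfin h0 hadd hx) ⟨s, hs, hord, rfl⟩

/-- Key Lemma A : `ord(s+x) ≤ ord s + ord x + l_x` for all `s, x ∈ T`. -/
lemma ordS_add_le (hfin : {x : ℕ | x ∉ T}.Finite) (h0 : (0:ℕ) ∈ T)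
    (hadd : ∀ a ∈ T, ∀ b ∈ T, a + b ∈ T) {s x : ℕ} (hs : s ∈ T) (hx : x ∈ T) :
    ordS T (s + x) ≤ ordS T s + ordS T x + lS T x := by
  set r := redNum T with hr
  set u := ordS T s with hu
  set w := ordS T (s + x) with hw
  have hw_ge : u + ordS T x ≤ w := ordS_add_ge hadd hs hx
  by_cases hur : u ≤ r
  · have := lS_ge hfin h0 hadd hx hs hur
    omega
  · push_neg at hur
    have hsm : s ∈ nM T (r + (u - r)) := by
      rw [show r + (u - r) = u by omega]; exact mem_nM_ordS hs
    obtain ⟨s₀, hs₀, hseq⟩ := redNum_iter hfin h0 hadd (u - r) s hsm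
    have hs₀T : s₀ ∈ T := nM_subset h0 hadd r hs₀
    have hs₀r : ordS T s₀ = r := by
      have h1 : r ≤ ordS T s₀ := le_ordS hs₀
      have h2 : (u - r) + ordS T s₀ ≤ u := by
        have h3 := le_ordS
          (nM_add_nM hadd _ _ _ _ (mult_nsmul_mem hfin h0 (u - r)) (mem_nM_ordS hs₀T))
        rw [← hseq] at h3
        exact h3
      omega
    have hsx : s + x ∈ nM T (r + (w - r)) := by
      rw [show r + (w - r) = w by omega]
      exact mem_nM_ordS (hadd s hs x hx)
    obtain ⟨z, hz, hzeq⟩ := redNum_iter hfin h0 hadd (w - r) _ hsx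
    have key : s₀ + x = (w - u) * mult T + z := by
      have h3 : (w - r) * mult T = (u - r) * mult T + (w - u) * mult T := by
        rw [← Nat.add_mul]; congr 1; omega
      omega
    have h4 : (w - u) + r ≤ ordS T (s₀ + x) := by
      have h5 := le_ordS (nM_add_nM hadd _ _ _ _ (mult_nsmul_mem hfin h0 (w - u)) hz)
      rw [← key] at h5
      exact h5
    have h6 := lS_ge hfin h0 hadd hx hs₀T (le_of_eq hs₀r)
    omega

lemma nsmulMemT (h0 : (0:ℕ) ∈ T) (hadd : ∀ a ∈ T, ∀ b ∈ T, a + b ∈ T)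
    {x : ℕ} (hx : x ∈ T) : ∀ t, t * x ∈ T := by
  intro t
  induction t with
  | zero => simpa using h0
  | succ t ih =>
    have : (t + 1) * x = t * x + x := by ring
    rw [this]; exact hadd _ ih _ hx

/-- iterated Lemma A -/
lemma ordS_add_mul_le (hfin : {x : ℕ | x ∉ T}.Finite) (h0 : (0:ℕ) ∈ T)
    (hadd : ∀ a ∈ T, ∀ b ∈ T, a + b ∈ T) {b x : ℕ} (hb : b ∈ T) (hx : x ∈ T) :
    ∀ t, ordS T (b + t * x) ≤ ordS T b + t * (ordS T x + lS T x) := by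
  intro t
  induction t with
  | zero => simp
  | succ t ih =>
    have hbt : b + t * x ∈ T := hadd b hb _ (nsmulMemT h0 hadd hx t)
    calc ordS T (b + (t+1) * x) = ordS T ((b + t * x) + x) := by
          rw [show b + (t+1) * x = (b + t * x) + x by ring]
      _ ≤ ordS T (b + t * x) + ordS T x + lS T x := ordS_add_le hfin h0 hadd hbt hx
      _ ≤ (ordS T b + t * (ordS T x + lS T x)) + ordS T x + lS T x := by omega
      _ = ordS T b + (t+1) * (ordS T x + lS T x) := by ring

lemma ordS_nsmul_ge (h0 : (0:ℕ) ∈ T) (hadd : ∀ a ∈ T, ∀ b ∈ T, a + b ∈ T)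
    {x : ℕ} (hx : x ∈ T) : ∀ t, t * ordS T x ≤ ordS T (t * x) := by
  intro t
  induction t with
  | zero => simp
  | succ t ih =>
    have h1 : (t+1) * x = t * x + x := by ring
    have h2 := ordS_add_ge hadd (nsmulMemT h0 hadd hx t) hx
    have h3 : (t+1) * ordS T x = t * ordS T x + ordS T x := by ring
    rw [h1]
    omega

lemma smul_nM {U : Set ℕ} {c : ℕ} (hc : 0 < c) (H : ∀ a ∈ T, c * a ∈ U) :
    ∀ u a, a ∈ nM T u → c * a ∈ nM U u := by
  intro u
  induction u with
  | zero => exact fun a ha => H a ha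
  | succ u ih =>
    intro a ha
    obtain ⟨μ, hμ, a', ha', rfl⟩ := Set.mem_add.1 ha
    have h1 : c * (μ + a') = c * μ + c * a' := by ring
    rw [h1]
    refine Set.mem_add.2 ⟨c * μ, ⟨H μ hμ.1, ?_⟩, c * a', ih a' ha', rfl⟩
    have hμ0 : μ ≠ 0 := by simpa using hμ.2
    simp only [Set.mem_singleton_iff]
    positivity

lemma one_mem_of_mem_closure {A : Set ℕ} (hA : ∀ a ∈ A, a ≠ 0)
    (h : (1:ℕ) ∈ AddSubmonoid.closure A) : (1:ℕ) ∈ A := by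
  obtain ⟨l, hl, hsum⟩ := AddSubmonoid.exists_list_of_mem_closure h
  match l, hsum with
  | [], hsum => simp at hsum
  | a :: l', hsum =>
    have ha : a ∈ A := hl a (by simp)
    have ha0 := hA a ha
    simp only [List.sum_cons] at hsum
    have : a = 1 := by omega
    rwa [← this]

end Library

section GluingLemmas

variable (G : Gluing)

lemma Gluing.m_ne (i : Fin G.d) : G.m i ≠ 0 := by
  intro h
  exact G.hmin₁ i (h ▸ zero_mem _)

lemma Gluing.n_ne (j : Fin G.k) : G.n j ≠ 0 := by
  intro h
  exact G.hmin₂ j (h ▸ zero_mem _)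

lemma Gluing.S₁_zero : (0:ℕ) ∈ G.S₁ := zero_mem _
lemma Gluing.S₂_zero : (0:ℕ) ∈ G.S₂ := zero_mem _
lemma Gluing.S_zero : (0:ℕ) ∈ G.S := zero_mem _
lemma Gluing.S₁_add : ∀ a ∈ G.S₁, ∀ b ∈ G.S₁, a + b ∈ G.S₁ := fun a ha b hb => add_mem ha hb
lemma Gluing.S₂_add : ∀ a ∈ G.S₂, ∀ b ∈ G.S₂, a + b ∈ G.S₂ := fun a ha b hb => add_mem ha hb
lemma Gluing.S_add : ∀ a ∈ G.S, ∀ b ∈ G.S, a + b ∈ G.S := fun a ha b hb => add_mem ha hb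
lemma Gluing.S₁_fin : {x : ℕ | x ∉ G.S₁}.Finite := G.hnum₁.2.2
lemma Gluing.S₂_fin : {x : ℕ | x ∉ G.S₂}.Finite := G.hnum₂.2.2

lemma Gluing.q_pos : 0 < G.q := by
  rcases Nat.eq_zero_or_pos G.q with h | h
  · exfalso
    have hp1 : G.p = 1 := by
      have := G.hpq
      rw [h] at this
      simpa using this
    have h1 : (1:ℕ) ∈ AddSubmonoid.closure (Set.range G.m) := hp1 ▸ G.hp
    have h2 : (1:ℕ) ∈ Set.range G.m :=
      one_mem_of_mem_closure (by rintro a ⟨i, rfl⟩; exact G.m_ne i) h1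
    exact G.hpm (hp1 ▸ h2)
  · exact h

lemma Gluing.p_pos : 0 < G.p := by
  rcases Nat.eq_zero_or_pos G.p with h | h
  · exfalso
    have hq1 : G.q = 1 := by
      have := G.hpq
      rw [h] at this
      simpa using this
    have h1 : (1:ℕ) ∈ AddSubmonoid.closure (Set.range G.n) := hq1 ▸ G.hq
    have h2 : (1:ℕ) ∈ Set.range G.n :=
      one_mem_of_mem_closure (by rintro a ⟨j, rfl⟩; exact G.n_ne j) h1
    exact G.hqn (hq1 ▸ h2)
  · exact h

lemma Gluing.mem_S_iff {s : ℕ} :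
    s ∈ G.S ↔ ∃ a ∈ G.S₁, ∃ b ∈ G.S₂, G.q * a + G.p * b = s := by
  have hq : (fun x => G.q * x) '' Set.range G.m = ⇑(AddMonoidHom.mulLeft G.q) '' Set.range G.m := rfl
  have hp : (fun x => G.p * x) '' Set.range G.n = ⇑(AddMonoidHom.mulLeft G.p) '' Set.range G.n := rfl
  show s ∈ (AddSubmonoid.closure _ : AddSubmonoid ℕ) ↔ _
  rw [AddSubmonoid.closure_union, hq, hp, ← AddMonoidHom.map_mclosure, ← AddMonoidHom.map_mclosure,
    AddSubmonoid.mem_sup]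
  constructor
  · rintro ⟨y, hy, z, hz, rfl⟩
    obtain ⟨a, ha, rfl⟩ := AddSubmonoid.mem_map.1 hy
    obtain ⟨b, hb, rfl⟩ := AddSubmonoid.mem_map.1 hz
    exact ⟨a, ha, b, hb, rfl⟩
  · rintro ⟨a, ha, b, hb, rfl⟩
    exact ⟨G.q * a, AddSubmonoid.mem_map.2 ⟨a, ha, rfl⟩,
      G.p * b, AddSubmonoid.mem_map.2 ⟨b, hb, rfl⟩, rfl⟩

lemma Gluing.q_mul_mem {a : ℕ} (ha : a ∈ G.S₁) : G.q * a ∈ G.S :=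
  G.mem_S_iff.2 ⟨a, ha, 0, G.S₂_zero, by ring⟩

lemma Gluing.p_mul_mem {b : ℕ} (hb : b ∈ G.S₂) : G.p * b ∈ G.S :=
  G.mem_S_iff.2 ⟨0, G.S₁_zero, b, hb, by ring⟩

end GluingLemmas

section GluingMain

variable (G : Gluing)

/-- upper bound on `ord_S` via representations -/
lemma Gluing.nM_S_bound : ∀ w s, s ∈ nM G.S w →
    ∃ a ∈ G.S₁, ∃ b ∈ G.S₂, G.q * a + G.p * b = s ∧ w ≤ ordS G.S₁ a + ordS G.S₂ b := by
  intro w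
  induction w with
  | zero =>
    intro s hs
    obtain ⟨a, ha, b, hb, heq⟩ := G.mem_S_iff.1 hs
    exact ⟨a, ha, b, hb, heq, Nat.zero_le _⟩
  | succ w ih =>
    intro s hs
    obtain ⟨lam, hlam, y, hy, rfl⟩ := Set.mem_add.1 hs
    obtain ⟨α, hα, β, hβ, heqL⟩ := G.mem_S_iff.1 hlam.1
    obtain ⟨a', ha', b', hb', heqy, hbound⟩ := ih y hy
    refine ⟨α + a', G.S₁_add _ hα _ ha', β + b', G.S₂_add _ hβ _ hb', by
      rw [← heqL, ← heqy]; ring, ?_⟩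
    have h1 : ordS G.S₁ α + ordS G.S₁ a' ≤ ordS G.S₁ (α + a') := ordS_add_ge G.S₁_add hα ha'
    have h2 : ordS G.S₂ β + ordS G.S₂ b' ≤ ordS G.S₂ (β + b') := ordS_add_ge G.S₂_add hβ hb'
    have h3 : 1 ≤ ordS G.S₁ α + ordS G.S₂ β := by
      have hlam0 : G.q * α + G.p * β ≠ 0 := by
        rw [heqL]; simpa using hlam.2
      rcases Nat.eq_zero_or_pos α with rfl | hα0
      · have hβ0 : β ≠ 0 := by
          intro h; rw [h] at hlam0; simp at hlam0
        have := ordS_pos G.S₂_zero hβ hβ0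
        omega
      · have := ordS_pos G.S₁_zero hα (by omega)
        omega
    omega

/-- any representation compared with the Apéry representation -/
lemma Gluing.rep_compare {a b a' b' : ℕ} (hb : b ∈ Ap G.S₂ G.q) (hb' : b' ∈ G.S₂)
    (h : G.q * a + G.p * b = G.q * a' + G.p * b') :
    ∃ t, b' = b + G.q * t ∧ a = a' + G.p * t := by
  have hq0 := G.q_pos
  have hcop : Nat.Coprime G.q G.p := Nat.Coprime.symm G.hpq
  rcases le_or_gt b' b with hle | hlt
  · -- b' ≤ b : must be equal
    have hmul : G.p * b' ≤ G.p * b := Nat.mul_le_mul_left _ hle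
    have hd : G.p * (b - b') = G.p * b - G.p * b' := Nat.mul_sub _ _ _
    have hqle : G.q * a ≤ G.q * a' := by omega
    have haa : a ≤ a' := Nat.le_of_mul_le_mul_left hqle hq0
    have h7 : G.q * (a' - a) = G.q * a' - G.q * a := Nat.mul_sub _ _ _
    have hqd : G.p * (b - b') = G.q * (a' - a) := by omega
    have hdvd2 : G.q ∣ (b - b') := hcop.dvd_of_dvd_mul_left ⟨a' - a, hqd⟩
    obtain ⟨u, hu⟩ := hdvd2
    rcases Nat.eq_zero_or_pos u with rfl | hu0
    · simp only [Nat.mul_zero] at hu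
      have hbb : b = b' := by omega
      rw [hbb] at h
      refine ⟨0, by omega, ?_⟩
      have : a = a' := Nat.eq_of_mul_eq_mul_left hq0 (by omega)
      omega
    · exfalso
      apply hb.2
      refine ⟨b' + G.q * (u - 1), add_mem hb' ?_, ?_⟩
      · have : G.q * (u-1) = (u-1) * G.q := by ring
        rw [this]
        exact nsmulMemT G.S₂_zero G.S₂_add G.hq (u-1)
      · have h8 : G.q * u = G.q * (u - 1) + G.q := by
          calc G.q * u = G.q * ((u-1) + 1) := by rw [Nat.sub_add_cancel hu0]
          _ = G.q * (u-1) + G.q := by ring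
        omega
  · -- b < b'
    have hmul : G.p * b ≤ G.p * b' := Nat.mul_le_mul_left _ (le_of_lt hlt)
    have hd : G.p * (b' - b) = G.p * b' - G.p * b := Nat.mul_sub _ _ _
    have hqle : G.q * a' ≤ G.q * a := by omega
    have haa : a' ≤ a := Nat.le_of_mul_le_mul_left hqle hq0
    have h7 : G.q * (a - a') = G.q * a - G.q * a' := Nat.mul_sub _ _ _
    have hqd : G.p * (b' - b) = G.q * (a - a') := by omega
    have hdvd2 : G.q ∣ (b' - b) := hcop.dvd_of_dvd_mul_left ⟨a - a', hqd⟩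
    obtain ⟨t, ht⟩ := hdvd2
    rw [ht] at hqd
    refine ⟨t, by omega, ?_⟩
    have h9 : G.q * (a - a') = G.q * (G.p * t) := by
      have : G.q * (G.p * t) = G.p * (G.q * t) := by ring
      omega
    have := Nat.eq_of_mul_eq_mul_left hq0 h9
    omega

/-- every element of `S₂` reduces into the Apéry set of `q` -/
lemma Gluing.Ap_exists : ∀ b₀ ∈ G.S₂, ∃ b ∈ Ap G.S₂ G.q, ∃ t, b₀ = b + G.q * t := by
  have hq0 := G.q_pos
  intro b₀
  induction b₀ using Nat.strong_induction_on with
  | _ b₀ ih =>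
    intro hb₀
    by_cases hA : ∃ t ∈ G.S₂, b₀ = t + G.q
    · obtain ⟨t', ht', rfl⟩ := hA
      obtain ⟨b, hb, t, rfl⟩ := ih t' (by omega) ht'
      exact ⟨b, hb, t + 1, by ring⟩
    · exact ⟨b₀, ⟨hb₀, hA⟩, 0, by ring⟩

end GluingMain

section Final
variable (G : Gluing)

/-- the order formula for a specific gluing -/
lemma Gluing.ord_formula (hG : G.Specific) {a b : ℕ} (ha : a ∈ G.S₁) (hb : b ∈ Ap G.S₂ G.q) :
    ordS G.S (G.q * a + G.p * b) = ordS G.S₁ a + ordS G.S₂ b := by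
  have hbS := hb.1
  have hmem : G.q * a + G.p * b ∈ G.S := add_mem (G.q_mul_mem ha) (G.p_mul_mem hbS)
  apply le_antisymm
  · apply ordS_le hmem
    intro w hw
    obtain ⟨a', ha', b', hb', heq, hbound⟩ := G.nM_S_bound w _ hw
    obtain ⟨t, hb'e, hae⟩ := G.rep_compare hb hb' heq.symm
    have h1 : ordS G.S₂ b' ≤ ordS G.S₂ b + t * (ordS G.S₂ G.q + lS G.S₂ G.q) := by
      rw [hb'e, mul_comm G.q t]
      exact ordS_add_mul_le G.S₂_fin G.S₂_zero G.S₂_add hbS G.hq t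
    have h2 : t * (ordS G.S₂ G.q + lS G.S₂ G.q) ≤ t * ordS G.S₁ G.p :=
      Nat.mul_le_mul_left t hG
    have h3 : ordS G.S₁ a' + t * ordS G.S₁ G.p ≤ ordS G.S₁ a := by
      rw [hae, mul_comm G.p t]
      have h4 := ordS_add_ge G.S₁_add ha' (nsmulMemT G.S₁_zero G.S₁_add G.hp t)
      have h5 := ordS_nsmul_ge G.S₁_zero G.S₁_add G.hp t
      omega
    omega
  · exact le_ordS (nM_add_nM G.S_add _ _ _ _
      (smul_nM G.q_pos (fun x hx => G.q_mul_mem hx) _ _ (mem_nM_ordS ha))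
      (smul_nM G.p_pos (fun x hx => G.p_mul_mem hx) _ _ (mem_nM_ordS hbS)))

lemma Gluing.m₁_mem : G.m₁ ∈ G.S₁ := AddSubmonoid.subset_closure ⟨⟨0, G.hd⟩, rfl⟩

lemma Gluing.zero_Ap : (0:ℕ) ∈ Ap G.S₂ G.q := by
  refine ⟨G.S₂_zero, ?_⟩
  rintro ⟨t, ht, h⟩
  have := G.q_pos
  omega

end Final

theorem stmt15' (G : Gluing) (hG : G.Specific) :
    (∀ s ∈ G.S, ordS G.S (s + G.q * G.m₁) = ordS G.S s + 1) ↔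
      (∀ s ∈ G.S₁, ordS G.S₁ (s + G.m₁) = ordS G.S₁ s + 1) := by
  constructor
  · intro hS a ha
    have h0 := G.ord_formula hG ha G.zero_Ap
    have h1 := G.ord_formula hG (add_mem ha G.m₁_mem) G.zero_Ap
    have h2 := hS (G.q * a) (G.q_mul_mem ha)
    rw [mul_zero, add_zero, ordS_zero G.S₂_zero, add_zero] at h0 h1
    rw [mul_add] at h1
    omega
  · intro hS1 s hs
    obtain ⟨a₀, ha₀, b₀, hb₀, heq⟩ := G.mem_S_iff.1 hs
    obtain ⟨b, hb, t, hbt⟩ := G.Ap_exists b₀ hb₀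
    have ha : a₀ + G.p * t ∈ G.S₁ := add_mem ha₀
      (by rw [mul_comm]; exact nsmulMemT G.S₁_zero G.S₁_add G.hp t)
    have hseq : s = G.q * (a₀ + G.p * t) + G.p * b := by rw [← heq, hbt]; ring
    have h1 := G.ord_formula hG ha hb
    have h2 := G.ord_formula hG (add_mem ha G.m₁_mem) hb
    have h3 := hS1 _ ha
    rw [hseq]
    have hse2 : G.q * (a₀ + G.p * t) + G.p * b + G.q * G.m₁
        = G.q * ((a₀ + G.p * t) + G.m₁) + G.p * b := by ring
    rw [hse2, h2, h3, h1]
    omega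

/-- for a specific gluing `S` of `S₁` and `S₂`,
`ord_S(s + qm₁) = ord_S(s) + 1` for all `s ∈ S` iff
`ord_{S₁}(s + m₁) = ord_{S₁}(s) + 1` for all `s ∈ S₁`; equivalently (by García's
criterion) `G(S)` is Cohen–Macaulay iff `G(S₁)` is Cohen–Macaulay. -/
theorem stmt15 (G : Gluing) (hG : G.Specific) :
    (∀ s ∈ G.S, ordS G.S (s + G.q * G.m₁) = ordS G.S s + 1) ↔
      (∀ s ∈ G.S₁, ordS G.S₁ (s + G.m₁) = ordS G.S₁ s + 1) :=
  stmt15' G hG
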